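/- arXiv:2306.09976 — 2 statements merged into one kernel-verified Lean document; each statement's English description precedes it below -/
import Mathlib

section
/- Let e_1, ..., e_n be nonnegative random variables with Σ_{j ∈ N} E[e_j] ≤ n for a null set N. For any self-consistent rejection set R (every rejected e_j satisfies e_j ≥ n/(α|R|)), the realized false discovery proportion satisfies the pointwise bound FDP = |R ∩ N|/max(|R|,1) ≤ (α/n) Σ_{j ∈ N} e_j. -/
open MeasureTheory ENNReal

/-- Pointwise FDP bound: for a self-consistent rejection set built from relaxed e-values,
the realized false discovery proportion is bounded by `(α/n) Σ_{j ∈ N} e_j`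
for every realization. -/
theorem selfConsistent_pointwise_FDP_bound {Ω : Type*} [MeasurableSpace Ω]
    (μ : Measure Ω) [IsProbabilityMeasure μ]
    (n : ℕ) (e : Fin n → Ω → ℝ≥0∞) (N : Finset (Fin n))
    (hrelaxed : ∑ j ∈ N, ∫⁻ ω, e j ω ∂μ ≤ (n : ℝ≥0∞))
    (α : ℝ≥0∞) (hα0 : 0 < α) (hα1 : α < 1)
    (R : Ω → Finset (Fin n))
    (hsc : ∀ ω, ∀ j ∈ R ω, (n : ℝ≥0∞) / (α * ((R ω).card : ℝ≥0∞)) ≤ e j ω) :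
    ∀ ω, ((R ω ∩ N).card : ℝ≥0∞) / (max ((R ω).card : ℝ≥0∞) 1)
      ≤ (α / (n : ℝ≥0∞)) * ∑ j ∈ N, e j ω := by
  intro ω
  by_cases hR : R ω = ∅
  · simp [hR]
  · obtain ⟨j0, hj0⟩ := Finset.nonempty_of_ne_empty hR
    have hn : 0 < n := Fin.pos j0
    have hc1 : (1 : ℝ≥0∞) ≤ ((R ω).card : ℝ≥0∞) := by
      exact_mod_cast Finset.card_pos.mpr ⟨j0, hj0⟩
    have hmax : max ((R ω).card : ℝ≥0∞) 1 = ((R ω).card : ℝ≥0∞) := max_eq_left hc1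
    set c : ℝ≥0∞ := ((R ω).card : ℝ≥0∞) with hc
    set m : ℝ≥0∞ := ((R ω ∩ N).card : ℝ≥0∞) with hm
    have hα' : α ≠ 0 := hα0.ne'
    have hαt : α ≠ ⊤ := hα1.trans_le le_top |>.ne
    have hn0 : (n : ℝ≥0∞) ≠ 0 := by exact_mod_cast hn.ne'
    have hnt : (n : ℝ≥0∞) ≠ ⊤ := natCast_ne_top n
    have hc0 : c ≠ 0 := by positivity
    have hct : c ≠ ⊤ := natCast_ne_top _
    have key : m * ((n : ℝ≥0∞) / (α * c)) ≤ ∑ j ∈ N, e j ω := by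
      calc m * ((n : ℝ≥0∞) / (α * c))
          = ∑ _j ∈ R ω ∩ N, (n : ℝ≥0∞) / (α * c) := by
            rw [Finset.sum_const, nsmul_eq_mul]
        _ ≤ ∑ j ∈ R ω ∩ N, e j ω := by
            refine Finset.sum_le_sum fun j hj => ?_
            exact hsc ω j (Finset.mem_inter.mp hj).1
        _ ≤ ∑ j ∈ N, e j ω := by
            exact Finset.sum_le_sum_of_subset Finset.inter_subset_right
    have heq : (α / (n : ℝ≥0∞)) * (m * ((n : ℝ≥0∞) / (α * c))) = m / c := by
      rw [div_eq_mul_inv, div_eq_mul_inv, div_eq_mul_inv,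
        ENNReal.mul_inv (Or.inl hα') (Or.inl hαt)]
      calc α * (n : ℝ≥0∞)⁻¹ * (m * ((n : ℝ≥0∞) * (α⁻¹ * c⁻¹)))
          = (α * α⁻¹) * ((n : ℝ≥0∞) * (n : ℝ≥0∞)⁻¹) * (m * c⁻¹) := by ring
        _ = m * c⁻¹ := by
            rw [ENNReal.mul_inv_cancel hα' hαt, ENNReal.mul_inv_cancel hn0 hnt,
              one_mul, one_mul]
    rw [hmax, ← heq]
    exact mul_le_mul_right key _
end

section
/- In the e-filter, fix levels α_1,...,α_M ∈ [0,1] and e-values e ∈ [0,∞]^n. Define the feasible threshold set T̂ = {(t_1,...,t_M) : t_m · max(|R_m(t)|, 1) ≥ |A^m|/α_m for all m}, where R_m(t) is the set of groups at layer m intersecting the joint rejection set R(t) = {i : Mean(e over group of i at layer m) ≥ t_m for all m}. Let t̂_m be the minimum m-th coordinate over T̂. Then (t̂_1,...,t̂_M) ∈ T̂. -/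
open ENNReal Finset

section eFilter

variable {n M : ℕ}

/-- Group average of e-values over the group of hypothesis `i` at layer `m`, where
`part m i` is the group of `i` in the partition at layer `m`. -/
noncomputable def groupMean (part : Fin M → Fin n → Finset (Fin n))
    (e : Fin n → ℝ≥0∞) (m : Fin M) (i : Fin n) : ℝ≥0∞ :=
  (∑ j ∈ part m i, e j) / ((part m i).card : ℝ≥0∞)

/-- Joint rejection set of the e-filter at thresholds `t`. -/
noncomputable def jointRejections (part : Fin M → Fin n → Finset (Fin n))
    (e : Fin n → ℝ≥0∞) (t : Fin M → ℝ≥0∞) : Finset (Fin n) :=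
  Finset.univ.filter (fun i => ∀ m, t m ≤ groupMean part e m i)

/-- Groups at layer `m` that intersect the joint rejection set. -/
noncomputable def layerRejections (part : Fin M → Fin n → Finset (Fin n))
    (e : Fin n → ℝ≥0∞) (t : Fin M → ℝ≥0∞) (m : Fin M) : Finset (Finset (Fin n)) :=
  (jointRejections part e t).image (part m)

/-- The set of feasible threshold vectors of the e-filter. -/
noncomputable def feasibleThresholds (part : Fin M → Fin n → Finset (Fin n))
    (e : Fin n → ℝ≥0∞) (α : Fin M → ℝ≥0∞) : Set (Fin M → ℝ≥0∞) :=
  {t | ∀ m : Fin M,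
    ((Finset.univ.image (part m)).card : ℝ≥0∞) / α m
      ≤ t m * max ((layerRejections part e t m).card : ℝ≥0∞) 1}

end eFilter

/-- Theorem S.1 (e-filter): the componentwise minima of the feasible threshold set are
themselves feasible. -/
theorem eFilter_componentwise_min_feasible {n M : ℕ}
    (part : Fin M → Fin n → Finset (Fin n))
    (hpart_mem : ∀ m i, i ∈ part m i)
    (hpart_eq : ∀ m i j, j ∈ part m i → part m j = part m i)
    (e : Fin n → ℝ≥0∞)
    (α : Fin M → ℝ≥0∞) (hα : ∀ m, α m ≤ 1) :
    (fun m => sInf ((fun t => t m) '' feasibleThresholds part e α))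
      ∈ feasibleThresholds part e α := by
  set t0 : Fin M → ℝ≥0∞ := fun m => sInf ((fun t => t m) '' feasibleThresholds part e α)
    with ht0
  intro m
  set K : ℝ≥0∞ := max ((layerRejections part e t0 m).card : ℝ≥0∞) 1 with hK
  have hK0 : K ≠ 0 := by
    simp [hK]
  have hKt : K ≠ ⊤ := by
    simp [hK, lt_top_iff_ne_top.mp]
  have key : ∀ t ∈ feasibleThresholds part e α,
      ((Finset.univ.image (part m)).card : ℝ≥0∞) / α m / K ≤ t m := by
    intro t ht
    have hle : ∀ m', t0 m' ≤ t m' := fun m' => sInf_le ⟨t, ht, rfl⟩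
    have hsub : jointRejections part e t ⊆ jointRejections part e t0 := by
      intro i hi
      simp only [jointRejections, Finset.mem_filter, Finset.mem_univ, true_and] at hi ⊢
      exact fun m' => le_trans (hle m') (hi m')
    have hcard : ((layerRejections part e t m).card : ℝ≥0∞)
        ≤ ((layerRejections part e t0 m).card : ℝ≥0∞) := by
      exact_mod_cast Finset.card_le_card (Finset.image_subset_image hsub)
    have h1 : ((Finset.univ.image (part m)).card : ℝ≥0∞) / α m ≤ t m * K :=
      (ht m).trans (mul_le_mul_right (max_le_max hcard le_rfl) (t m))
    rwa [ENNReal.div_le_iff hK0 hKt]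
  have h2 : ((Finset.univ.image (part m)).card : ℝ≥0∞) / α m / K ≤ t0 m := by
    apply le_sInf
    rintro x ⟨t, ht, rfl⟩
    exact key t ht
  calc ((Finset.univ.image (part m)).card : ℝ≥0∞) / α m
      = ((Finset.univ.image (part m)).card : ℝ≥0∞) / α m / K * K :=
        (ENNReal.div_mul_cancel hK0 hKt).symm
    _ ≤ t0 m * K := mul_le_mul_left h2 K
end
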